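/- Let X be an AM-space and x*₁, …, x*ₙ distinct norm-one lattice homomorphisms on X. Then for every a₁, …, aₙ ∈ [0,1] there exists x in the closed unit ball of X with x*ₖ(x) = aₖ for all k = 1, …, n. -/

import Mathlib

/-- A real-valued lattice homomorphism on a Banach lattice. -/
def IsLatticeHomFunctional {X : Type*} [NormedAddCommGroup X] [Lattice X] [HasSolidNorm X] [IsOrderedAddMonoid X] [NormedSpace ℝ X]
    (f : X →L[ℝ] ℝ) : Prop :=
  ∀ x y : X, f (x ⊔ y) = max (f x) (f y)

/-- An atom of a Banach lattice: a positive element generating a one-dimensional ideal. -/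
def IsLatAtom {X : Type*} [NormedAddCommGroup X] [Lattice X] [HasSolidNorm X] [IsOrderedAddMonoid X] [NormedSpace ℝ X] (x₀ : X) : Prop :=
  0 < x₀ ∧ ∀ y : X, 0 ≤ y → y ≤ x₀ → ∃ r : ℝ, y = r • x₀

/-- `l` is the coordinate functional of the atom `x₀`: the band projection onto the span of
`x₀` is `x ↦ l x • x₀`, i.e. `x - l x • x₀` is disjoint from `x₀` for every `x`. -/
def IsCoordinateFunctional {X : Type*} [NormedAddCommGroup X] [Lattice X] [HasSolidNorm X] [IsOrderedAddMonoid X] [NormedSpace ℝ X]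
    (l : X →L[ℝ] ℝ) (x₀ : X) : Prop :=
  ∀ x : X, |x - l x • x₀| ⊓ x₀ = 0

/-- An equivalent lattice norm on `X`. -/
structure LatticeNorm (X : Type*) [NormedAddCommGroup X] [Lattice X] [NormedSpace ℝ X] where
  n : X → ℝ
  add_le : ∀ x y : X, n (x + y) ≤ n x + n y
  smul_eq : ∀ (r : ℝ) (x : X), n (r • x) = |r| * n x
  eq_zero_of : ∀ x : X, n x = 0 → x = 0
  mono : ∀ x y : X, |x| ≤ |y| → n x ≤ n y
  lower : ∃ c : ℝ, 0 < c ∧ ∀ x : X, c * ‖x‖ ≤ n x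
  upper : ∃ C : ℝ, 0 < C ∧ ∀ x : X, n x ≤ C * ‖x‖

section helpers
variable {X : Type*} [NormedAddCommGroup X] [Lattice X] [HasSolidNorm X] [IsOrderedAddMonoid X] [NormedSpace ℝ X]
set_option linter.unusedSectionVars false



lemma lhf_nonneg {f : X →L[ℝ] ℝ} (hf : IsLatticeHomFunctional f) {x : X} (hx : 0 ≤ x) :
    0 ≤ f x := by
  have h := hf x 0
  rw [sup_eq_left.mpr hx, map_zero] at h
  rw [h]; exact le_max_right _ _

lemma lhf_map_inf {f : X →L[ℝ] ℝ} (hf : IsLatticeHomFunctional f) (x y : X) :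
    f (x ⊓ y) = min (f x) (f y) := by
  have h1 : f (x ⊓ y) + f (x ⊔ y) = f x + f y := by rw [← map_add, inf_add_sup, map_add]
  have h2 := hf x y
  rcases le_total (f x) (f y) with h | h
  · rw [h2, max_eq_right h] at h1; rw [min_eq_left h]; linarith
  · rw [h2, max_eq_left h] at h1; rw [min_eq_right h]; linarith

lemma smul_nonneg_of_nonneg {r : ℝ} (hr : 0 ≤ r) {x : X} (hx : 0 ≤ x) : 0 ≤ r • x := by
  have half : ∀ y : X, 0 ≤ y → 0 ≤ (2⁻¹ : ℝ) • y := by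
    intro y hy
    set b := (2⁻¹ : ℝ) • y with hb
    have hsum : b + b = y := by rw [hb, ← add_smul]; norm_num
    have h2 : -b ≤ b := by rw [← sub_nonneg, sub_neg_eq_add, hsum]; exact hy
    have h3 : b⁻ ≤ b⁺ := by
      rw [negPart_def, posPart_def]; exact sup_le_sup_right h2 0
    have h4 : b⁻ = 0 := by
      have := posPart_inf_negPart_eq_zero b
      rw [inf_eq_right.mpr h3] at this
      exact this
    exact negPart_eq_zero.mp h4
  have powhalf : ∀ i : ℕ, (0:X) ≤ ((2:ℝ) ^ i)⁻¹ • x := by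
    intro i; induction i with
    | zero => simpa using hx
    | succ i ih =>
      have : ((2:ℝ) ^ (i+1))⁻¹ = (2⁻¹ : ℝ) * ((2:ℝ) ^ i)⁻¹ := by
        rw [pow_succ, mul_inv]; ring
      rw [this, ← smul_smul]
      exact half _ ih
  have natsmul : ∀ (m : ℕ) (y : X), 0 ≤ y → (0:X) ≤ (m : ℝ) • y := by
    intro m y hy; induction m with
    | zero => simp
    | succ m ih =>
      push_cast
      rw [add_smul, one_smul]
      exact add_nonneg ih hy
  -- dyadic approximation
  set q : ℕ → ℝ := fun i => (⌊r * 2 ^ i⌋₊ : ℝ) / 2 ^ i with hq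
  have hq_nonneg : ∀ i, (0:X) ≤ q i • x := by
    intro i
    have : q i • x = (⌊r * 2 ^ i⌋₊ : ℝ) • (((2:ℝ) ^ i)⁻¹ • x) := by
      rw [smul_smul, hq]; ring_nf
    rw [this]
    exact natsmul _ _ (powhalf i)
  have h2pos : ∀ i : ℕ, (0:ℝ) < 2 ^ i := fun i => by positivity
  have hql : ∀ i, r - (2⁻¹ : ℝ) ^ i ≤ q i := by
    intro i
    have h1 : r * 2 ^ i - 1 ≤ (⌊r * 2 ^ i⌋₊ : ℝ) := by
      have := Nat.lt_floor_add_one (r * 2 ^ i)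
      linarith
    have hp : ((2:ℝ)⁻¹) ^ i * 2 ^ i = 1 := by
      rw [← mul_pow]; norm_num
    rw [hq]
    dsimp only
    rw [le_div_iff₀ (h2pos i)]
    nlinarith [h1]
  have hqu : ∀ i, q i ≤ r := by
    intro i
    rw [hq, div_le_iff₀ (h2pos i)]
    exact Nat.floor_le (by positivity)
  have hq_tendsto : Filter.Tendsto q Filter.atTop (nhds r) := by
    have hpow : Filter.Tendsto (fun i : ℕ => (2⁻¹:ℝ) ^ i) Filter.atTop (nhds 0) :=
      tendsto_pow_atTop_nhds_zero_of_lt_one (by norm_num) (by norm_num)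
    have hlow : Filter.Tendsto (fun i : ℕ => r - (2⁻¹:ℝ) ^ i) Filter.atTop (nhds r) := by
      simpa using hpow.const_sub r
    exact tendsto_of_tendsto_of_tendsto_of_le_of_le hlow tendsto_const_nhds hql hqu
  have hsx : Filter.Tendsto (fun i => q i • x) Filter.atTop (nhds (r • x)) :=
    hq_tendsto.smul_const x
  exact le_of_tendsto_of_tendsto' tendsto_const_nhds hsx hq_nonneg




/-- bound `f x ≤ ‖x‖` for norm-one `f`. -/
lemma lhf_le_norm {f : X →L[ℝ] ℝ} (hn : ‖f‖ = 1) (x : X) : f x ≤ ‖x‖ := by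
  calc f x ≤ |f x| := le_abs_self _
  _ = ‖f x‖ := (Real.norm_eq_abs _).symm
  _ ≤ ‖f‖ * ‖x‖ := f.le_opNorm x
  _ = ‖x‖ := by rw [hn, one_mul]

/-- almost norming positive vectors exist -/
lemma lhf_exists_almost {f : X →L[ℝ] ℝ} (hf : IsLatticeHomFunctional f) (hn : ‖f‖ = 1)
    {c : ℝ} (hc0 : 0 ≤ c) (hc1 : c < 1) :
    ∃ z : X, 0 ≤ z ∧ ‖z‖ ≤ 1 ∧ c < f z := by
  by_contra h
  push_neg at h
  have hb : ∀ x : X, ‖x‖ = 1 → ‖f x‖ ≤ c := by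
    intro x hx
    have habs : ∀ v : X, ‖v ⊔ 0‖ ≤ ‖v‖ := by
      intro v
      apply norm_le_norm_of_abs_le_abs
      rw [abs_of_nonneg (le_sup_right : (0:X) ≤ v ⊔ 0)]
      exact sup_le (le_abs_self v) (abs_nonneg v)
    have h1 : f (x ⊔ 0) ≤ c := by
      apply h _ le_sup_right
      exact le_trans (habs x) hx.le
    have h2 : f ((-x) ⊔ 0) ≤ c := by
      apply h _ le_sup_right
      refine le_trans (habs (-x)) (by rw [norm_neg, hx])
    have e1 : f (x ⊔ 0) = max (f x) 0 := by simpa using hf x 0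
    have e2 : f ((-x) ⊔ 0) = max (-(f x)) 0 := by simpa using hf (-x) 0
    rw [e1] at h1; rw [e2] at h2
    rw [Real.norm_eq_abs, abs_le]
    constructor <;> [skip; skip] <;>
      first
        | (have := le_trans (le_max_left (f x) 0) h1; linarith)
        | (have := le_trans (le_max_left (-(f x)) 0) h2; linarith)
  have : ‖f‖ ≤ c := ContinuousLinearMap.opNorm_le_of_unit_norm hc0 hb
  rw [hn] at this
  linarith

/-- Norm attainment at a positive vector. -/
lemma lhf_attains [CompleteSpace X]
    (hAM : ∀ x y : X, 0 ≤ x → 0 ≤ y → ‖x ⊔ y‖ = max ‖x‖ ‖y‖)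
    {f : X →L[ℝ] ℝ} (hf : IsLatticeHomFunctional f) (hn : ‖f‖ = 1) :
    ∃ e : X, 0 ≤ e ∧ ‖e‖ ≤ 1 ∧ f e = 1 := by
  have hz : ∀ m : ℕ, ∃ z : X, 0 ≤ z ∧ ‖z‖ ≤ 1 ∧ 1 - (2⁻¹:ℝ)^(m+1) < f z := by
    intro m
    apply lhf_exists_almost hf hn
    · have : (2⁻¹:ℝ)^(m+1) ≤ 1 := by
        apply pow_le_one₀ <;> norm_num
      linarith
    · have : (0:ℝ) < (2⁻¹:ℝ)^(m+1) := by positivity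
      linarith
  choose z hz0 hz1 hz2 using hz
  set Z : ℕ → X := fun m =>
    Nat.rec (z 0) (fun m Zm => Zm ⊔ (z (m+1) ⊓ (max 1 ((1 - (2⁻¹:ℝ)^(m+2)) / f Zm)) • Zm)) m
    with hZdef
  have hZ0 : Z 0 = z 0 := rfl
  have hZs : ∀ m, Z (m+1) = Z m ⊔ (z (m+1) ⊓ (max 1 ((1 - (2⁻¹:ℝ)^(m+2)) / f (Z m))) • Z m) :=
    fun m => rfl
  -- invariants
  have hinv : ∀ m, 0 ≤ Z m ∧ ‖Z m‖ ≤ 1 ∧ 1 - (2⁻¹:ℝ)^(m+1) ≤ f (Z m) ∧ f (Z m) ≤ 1 := by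
    intro m
    induction m with
    | zero =>
      exact ⟨hz0 0, hz1 0, (hz2 0).le, le_trans (lhf_le_norm hn _) (hz1 0)⟩
    | succ m ih =>
      obtain ⟨hm0, hm1, hm2, hm3⟩ := ih
      set c := f (Z m) with hc
      have hchalf : (1:ℝ)/2 ≤ c := by
        have : (2⁻¹:ℝ)^(m+1) ≤ 2⁻¹ := by
          apply pow_le_of_le_one <;> norm_num
        linarith
      have hcpos : (0:ℝ) < c := by linarith
      set lam := max 1 ((1 - (2⁻¹:ℝ)^(m+2)) / c) with hlam
      have hlam1 : (1:ℝ) ≤ lam := le_max_left _ _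
      have hlam0 : (0:ℝ) ≤ lam := by linarith
      set w := z (m+1) ⊓ lam • Z m with hw
      have hw0 : 0 ≤ w := le_inf (hz0 _) (smul_nonneg_of_nonneg hlam0 hm0)
      have hwnorm : ‖w‖ ≤ 1 := by
        refine le_trans ?_ (hz1 (m+1))
        apply norm_le_norm_of_abs_le_abs
        rw [abs_of_nonneg hw0, abs_of_nonneg (hz0 (m+1))]
        exact inf_le_left
      have hfw : f w = min (f (z (m+1))) (lam * c) := by
        rw [hw, lhf_map_inf hf, map_smul, smul_eq_mul, ← hc]
      have hfZ : f (Z (m+1)) = max c (f w) := by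
        rw [hZs m, hf, ← hc, ← hw]
      refine ⟨le_trans hm0 le_sup_left, ?_, ?_, ?_⟩
      · rw [hZs m, hAM _ _ hm0 hw0]
        exact max_le hm1 hwnorm
      · -- lower bound
        have hl1 : 1 - (2⁻¹:ℝ)^(m+2) ≤ lam * c := by
          have := le_max_right 1 ((1 - (2⁻¹:ℝ)^(m+2)) / c)
          rw [← hlam] at this
          calc 1 - (2⁻¹:ℝ)^(m+2) = ((1 - (2⁻¹:ℝ)^(m+2)) / c) * c :=
                (div_mul_cancel₀ _ (ne_of_gt hcpos)).symm
          _ ≤ lam * c := by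
                apply mul_le_mul_of_nonneg_right this hcpos.le
        have hl2 : 1 - (2⁻¹:ℝ)^(m+2) ≤ f (z (m+1)) := (hz2 (m+1)).le
        rw [hfZ, hfw]
        exact le_trans (le_min hl2 hl1) (le_max_right _ _)
      · rw [hfZ, hfw]
        apply max_le hm3
        exact le_trans (min_le_left _ _) (le_trans (lhf_le_norm hn _) (hz1 (m+1)))
  -- Cauchy estimate
  have hdiff : ∀ m, dist (Z m) (Z (m+1)) ≤ 1 * (2⁻¹:ℝ)^m := by
    intro m
    obtain ⟨hm0, hm1, hm2, hm3⟩ := hinv m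
    set c := f (Z m) with hc
    have hd : (2⁻¹:ℝ)^(m+2) ≤ 2⁻¹ ∧ (0:ℝ) < (2⁻¹:ℝ)^(m+2) := by
      constructor
      · apply pow_le_of_le_one <;> norm_num
      · positivity
    have hdm : (2⁻¹:ℝ)^(m+1) = 2 * (2⁻¹:ℝ)^(m+2) := by ring
    have hda : (2⁻¹:ℝ)^(m+1) ≤ 2⁻¹ := by
      apply pow_le_of_le_one <;> norm_num
    have hd14 : (2⁻¹:ℝ)^(m+2) ≤ 1/4 := by
      have h1 : (2⁻¹:ℝ)^(m+2) = (2⁻¹:ℝ)^m * (1/4) := by ring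
      have h2 : (2⁻¹:ℝ)^m ≤ 1 := pow_le_one₀ (by norm_num) (by norm_num)
      nlinarith [pow_nonneg (by norm_num : (0:ℝ) ≤ 2⁻¹) m]
    have hchalf : (1:ℝ)/2 ≤ c := by linarith
    have hcpos : (0:ℝ) < c := by linarith
    set lam := max 1 ((1 - (2⁻¹:ℝ)^(m+2)) / c) with hlam
    have hlam1 : (1:ℝ) ≤ lam := le_max_left _ _
    have hlamu : lam ≤ 1 + (2⁻¹:ℝ)^(m+1) := by
      apply max_le
      · nlinarith [hd.2, hdm]
      · rw [div_le_iff₀ hcpos]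
        nlinarith [hm2, hdm, hd.2, hd14]
    set w := z (m+1) ⊓ lam • Z m with hw
    have hZms : Z (m+1) = Z m ⊔ w := hZs m
    have hle1 : Z m ≤ lam • Z m := by
      have h0 : (0:X) ≤ (lam - 1) • Z m :=
        smul_nonneg_of_nonneg (by linarith) hm0
      rw [sub_smul, one_smul, sub_nonneg] at h0
      exact h0
    have hup : Z (m+1) ≤ lam • Z m := by
      rw [hZms]; exact sup_le hle1 inf_le_right
    have hlow : Z m ≤ Z (m+1) := by rw [hZms]; exact le_sup_left
    rw [dist_eq_norm']
    calc ‖Z (m+1) - Z m‖ ≤ ‖(lam - 1) • Z m‖ := by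
          apply norm_le_norm_of_abs_le_abs
          rw [abs_of_nonneg (sub_nonneg.mpr hlow), abs_of_nonneg
            (smul_nonneg_of_nonneg (by linarith : (0:ℝ) ≤ lam - 1) hm0)]
          rw [sub_smul, one_smul]
          exact sub_le_sub_right hup _
    _ = |lam - 1| * ‖Z m‖ := by rw [norm_smul, Real.norm_eq_abs]
    _ ≤ (2⁻¹:ℝ)^(m+1) * 1 := by
          apply mul_le_mul _ hm1 (norm_nonneg _) (by positivity)
          rw [abs_of_nonneg (by linarith)]
          linarith
    _ ≤ 1 * (2⁻¹:ℝ)^m := by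
          rw [mul_one, one_mul, pow_succ]
          nlinarith [pow_nonneg (by norm_num : (0:ℝ) ≤ 2⁻¹) m, pow_le_one₀ (by norm_num : (0:ℝ) ≤ 2⁻¹) (by norm_num : (2⁻¹:ℝ) ≤ 1) (n := m)]
  have hcauchy : CauchySeq Z := cauchySeq_of_le_geometric 2⁻¹ 1 (by norm_num) hdiff
  obtain ⟨e, he⟩ := cauchySeq_tendsto_of_complete hcauchy
  have hfZ : Filter.Tendsto (fun m => f (Z m)) Filter.atTop (nhds (f e)) :=
    (f.continuous.tendsto e).comp he
  have hpow : Filter.Tendsto (fun m : ℕ => 1 - (2⁻¹:ℝ)^(m+1)) Filter.atTop (nhds 1) := by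
    have h1 : Filter.Tendsto (fun m : ℕ => (2⁻¹:ℝ)^(m+1)) Filter.atTop (nhds 0) := by
      have := (tendsto_pow_atTop_nhds_zero_of_lt_one (by norm_num : (0:ℝ) ≤ 2⁻¹)
        (by norm_num)).comp (Filter.tendsto_add_atTop_nat 1)
      simpa [Function.comp_def] using this
    simpa using h1.const_sub 1
  refine ⟨e, ?_, ?_, ?_⟩
  · exact le_of_tendsto_of_tendsto' tendsto_const_nhds he (fun m => (hinv m).1)
  · have : Filter.Tendsto (fun m => ‖Z m‖) Filter.atTop (nhds ‖e‖) :=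
      (continuous_norm.tendsto e).comp he
    exact le_of_tendsto' this (fun m => (hinv m).2.1)
  · have hle : f e ≤ 1 := le_of_tendsto' hfZ (fun m => (hinv m).2.2.2)
    have hge : 1 ≤ f e :=
      le_of_tendsto_of_tendsto' hpow hfZ (fun m => (hinv m).2.2.1)
    exact le_antisymm hle hge




/-- Separation: distinct lattice homs admit positive `u` with `f u = 0`, `g u = 1`. -/
lemma lhf_separate {f g : X →L[ℝ] ℝ} (hf : IsLatticeHomFunctional f)
    (hg : IsLatticeHomFunctional g) (hnf : ‖f‖ = 1) (hng : ‖g‖ = 1) (hfg : f ≠ g)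
    {e : X} (he0 : 0 ≤ e) (he1 : g e = 1) :
    ∃ u : X, 0 ≤ u ∧ f u = 0 ∧ g u = 1 := by
  by_cases hker : ∀ x : X, f x = 0 → g x = 0
  · exfalso
    -- then g = (g w) • f for some w with f w = 1
    have hfne : ∃ w : X, f w = 1 := by
      by_contra hco
      push_neg at hco
      have : ∀ x : X, f x = 0 := by
        intro x
        by_contra hx
        exact hco ((f x)⁻¹ • x) (by rw [map_smul, smul_eq_mul, inv_mul_cancel₀ hx])
      have : f = 0 := ContinuousLinearMap.ext fun x => by simp [this x]
      rw [this] at hnf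
      simp at hnf
    obtain ⟨w, hw⟩ := hfne
    have hgx : ∀ x : X, g x = g w * f x := by
      intro x
      have h0 : f (x - f x • w) = 0 := by
        rw [map_sub, map_smul, smul_eq_mul, hw, mul_one, sub_self]
      have h1 := hker _ h0
      rw [map_sub, map_smul, smul_eq_mul, sub_eq_zero] at h1
      rw [h1]; ring
    have hgsf : g = (g w) • f := ContinuousLinearMap.ext fun x => by
      rw [hgx x]; simp [smul_eq_mul]
    have habs : |g w| = 1 := by
      have := congrArg norm hgsf
      rw [norm_smul (g w) f, Real.norm_eq_abs, hnf, hng, mul_one] at this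
      exact this.symm
    rcases abs_eq (by norm_num : (0:ℝ) ≤ 1) |>.mp habs with h1 | h1
    · apply hfg
      apply ContinuousLinearMap.ext
      intro x
      rw [hgx x, h1, one_mul]
    · have := hgx e
      rw [he1, h1] at this
      have hfe : f e = -1 := by linarith
      have := lhf_nonneg hf he0
      rw [hfe] at this
      linarith
  · push_neg at hker
    obtain ⟨x0, hx0f, hx0g⟩ := hker
    set u0 := (g x0)⁻¹ • x0 with hu0
    have hu0f : f u0 = 0 := by rw [hu0, map_smul, smul_eq_mul, hx0f, mul_zero]
    have hu0g : g u0 = 1 := by rw [hu0, map_smul, smul_eq_mul, inv_mul_cancel₀ hx0g]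
    refine ⟨u0 ⊔ 0, le_sup_right, ?_, ?_⟩
    · have := hf u0 0
      rw [map_zero, hu0f] at this
      simpa using this
    · have := hg u0 0
      rw [map_zero, hu0g] at this
      simpa using this

/-- norm bound for sup' of positive norm-≤1 elements in an AM space -/
lemma sup'_pos_norm_le
    (hAM : ∀ x y : X, 0 ≤ x → 0 ≤ y → ‖x ⊔ y‖ = max ‖x‖ ‖y‖)
    {ι : Type*} (s : Finset ι) (hs : s.Nonempty) (t : ι → X) :
    (∀ i ∈ s, 0 ≤ t i ∧ ‖t i‖ ≤ 1) → 0 ≤ s.sup' hs t ∧ ‖s.sup' hs t‖ ≤ 1 := by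
  induction hs using Finset.Nonempty.cons_induction with
  | singleton i =>
    intro h
    simpa using h i (Finset.mem_singleton_self i)
  | cons i s hi hne ih =>
    intro h
    rw [Finset.sup'_cons (H := hne)]
    have hi' := h i (by simp)
    have hs' : ∀ j ∈ s, 0 ≤ t j ∧ ‖t j‖ ≤ 1 := fun j hj => h j (by simp [hj])
    obtain ⟨hsup0, hsupn⟩ := ih hs'
    constructor
    · exact le_trans hi'.1 le_sup_left
    · rw [hAM _ _ hi'.1 hsup0]
      exact max_le hi'.2 hsupn


end helpers

/-- given distinct norm-one lattice homomorphisms `f 1, …, f n` on an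
AM-space and values `a k ∈ [0,1]`, there is an `x` in the closed unit ball with
`f k x = a k` for all `k`. -/
theorem AM_space_urysohn_for_latticeHoms
    {X : Type*} [NormedAddCommGroup X] [Lattice X] [HasSolidNorm X] [IsOrderedAddMonoid X] [NormedSpace ℝ X] [CompleteSpace X]
    (hAM : ∀ x y : X, 0 ≤ x → 0 ≤ y → ‖x ⊔ y‖ = max ‖x‖ ‖y‖)
    (n : ℕ) (f : Fin n → (X →L[ℝ] ℝ)) (hinj : Function.Injective f)
    (hhom : ∀ k, IsLatticeHomFunctional (f k)) (hnorm : ∀ k, ‖f k‖ = 1)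
    (a : Fin n → ℝ) (ha : ∀ k, a k ∈ Set.Icc (0:ℝ) 1) :
    ∃ x : X, ‖x‖ ≤ 1 ∧ ∀ k, f k x = a k := by
  rcases Nat.eq_zero_or_pos n with hn0 | hnpos
  · subst hn0
    exact ⟨0, by simp, fun k => k.elim0⟩
  have : Nonempty (Fin n) := ⟨⟨0, hnpos⟩⟩
  have hne : (Finset.univ : Finset (Fin n)).Nonempty := Finset.univ_nonempty
  -- norm attaining positive elements
  have hatt : ∀ k, ∃ e : X, 0 ≤ e ∧ ‖e‖ ≤ 1 ∧ f k e = 1 :=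
    fun k => lhf_attains hAM (hhom k) (hnorm k)
  choose e he0 he1 he2 using hatt
  -- pairwise separating elements
  have H : ∀ k j : Fin n, ∃ u : X,
      0 ≤ u ∧ (j ≠ k → f j u = 0) ∧ f k u = 1 ∧ (j = k → ‖u‖ ≤ 1) := by
    intro k j
    by_cases hjk : j = k
    · exact ⟨e k, he0 k, fun hne' => absurd hjk hne', he2 k, fun _ => he1 k⟩
    · obtain ⟨u, hu0, huf, hug⟩ :=
        lhf_separate (hhom j) (hhom k) (hnorm j) (hnorm k)
          (fun h => hjk (hinj h)) (he0 k) (he2 k)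
      exact ⟨u, hu0, fun _ => huf, hug, fun h => absurd h hjk⟩
  choose u hu0 hu1 hu2 hu3 using H
  -- the "Urysohn" elements
  set y : Fin n → X := fun k => Finset.univ.inf' hne (u k) with hy
  have hy0 : ∀ k, 0 ≤ y k := fun k => Finset.le_inf' hne _ fun j _ => hu0 k j
  have hynorm : ∀ k, ‖y k‖ ≤ 1 := by
    intro k
    refine le_trans ?_ (hu3 k k rfl)
    apply norm_le_norm_of_abs_le_abs
    rw [abs_of_nonneg (hy0 k), abs_of_nonneg (hu0 k k)]
    exact Finset.inf'_le _ (Finset.mem_univ k)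
  have hmapinf : ∀ (i k : Fin n), f i (y k) = Finset.univ.inf' hne (fun j => f i (u k j)) := by
    intro i k
    let F : InfHom X ℝ :=
      ⟨f i, fun x1 x2 => by rw [lhf_map_inf (hhom i) x1 x2]⟩
    exact map_finset_inf' F hne (u k)
  have hyk : ∀ k, f k (y k) = 1 := by
    intro k
    rw [hmapinf k k]
    apply le_antisymm
    · refine le_trans (Finset.inf'_le _ (Finset.mem_univ k)) ?_
      rw [hu2 k k]
    · exact Finset.le_inf' hne _ fun j _ => (hu2 k j).ge
  have hyj : ∀ i k, i ≠ k → f i (y k) = 0 := by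
    intro i k hik
    rw [hmapinf i k]
    apply le_antisymm
    · refine le_trans (Finset.inf'_le _ (Finset.mem_univ i)) ?_
      rw [hu1 k i hik]
    · exact Finset.le_inf' hne _ fun j _ => lhf_nonneg (hhom i) (hu0 k j)
  -- the final element
  set t : Fin n → X := fun k => a k • y k with ht
  have ht' : ∀ i ∈ Finset.univ, 0 ≤ t i ∧ ‖t i‖ ≤ 1 := by
    intro i _
    constructor
    · exact smul_nonneg_of_nonneg (ha i).1 (hy0 i)
    · rw [ht]
      dsimp only
      rw [norm_smul, Real.norm_eq_abs, abs_of_nonneg (ha i).1]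
      calc a i * ‖y i‖ ≤ 1 * 1 :=
        mul_le_mul (ha i).2 (hynorm i) (norm_nonneg _) zero_le_one
      _ = 1 := by norm_num
  obtain ⟨hx0, hxnorm⟩ := sup'_pos_norm_le hAM Finset.univ hne t ht'
  refine ⟨Finset.univ.sup' hne t, hxnorm, ?_⟩
  intro k
  have hmapsup : f k (Finset.univ.sup' hne t) = Finset.univ.sup' hne (fun j => f k (t j)) := by
    let G : SupHom X ℝ := ⟨f k, fun x1 x2 => by rw [hhom k x1 x2]⟩
    exact map_finset_sup' G hne t
  rw [hmapsup]
  apply le_antisymm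
  · apply Finset.sup'_le
    intro j _
    rw [ht]
    dsimp only
    rw [map_smul, smul_eq_mul]
    by_cases hjk : j = k
    · subst hjk; rw [hyk j]; simp
    · rw [hyj k j (fun h => hjk h.symm), mul_zero]
      exact (ha k).1
  · refine le_trans ?_ (Finset.le_sup' _ (Finset.mem_univ k))
    rw [ht]
    dsimp only
    rw [map_smul, smul_eq_mul, hyk k, mul_one]
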